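/- Let n ≥ 1 and P_n = ℤ[X_1,…,X_n]. For each w ∈ S_n fix a reduced expression and let ∂_w be the corresponding composite of Demazure operators. If a family (P_w)_{w ∈ S_n} of elements of P_n satisfies ∑_{w ∈ S_n} P_w · ∂_w(Q) = 0 for all Q ∈ P_n, then P_w = 0 for every w. In other words, the operators (m_{P} ∘ ∂_w) realize the nil affine Hecke algebra faithfully: the family (∂_w)_{w∈S_n} of endomorphisms of P_n is linearly independent over P_n. -/

import Mathlib

open MvPolynomial

/-- The adjacent transposition `s i = (i, i+1)` in the symmetric group on `{1, …, n+1}`. -/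
def adjTrans (n : ℕ) (i : Fin n) : Equiv.Perm (Fin (n + 1)) :=
  Equiv.swap i.castSucc i.succ

/-- The number of inversions of a permutation `w` of `{1, …, n+1}`. -/
def inversions (n : ℕ) (w : Equiv.Perm (Fin (n + 1))) : ℕ :=
  (Finset.univ.filter fun p : Fin (n + 1) × Fin (n + 1) => p.1 < p.2 ∧ w p.2 < w p.1).card

namespace DemazureLI

/-! ### Combinatorics of inversions -/

lemma swap_lt_iff (n : ℕ) (i : Fin n) {x y : Fin (n + 1)}
    (h1 : ¬(x = i.castSucc ∧ y = i.succ)) (h2 : ¬(x = i.succ ∧ y = i.castSucc)) :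
    (Equiv.swap i.castSucc i.succ x < Equiv.swap i.castSucc i.succ y ↔ x < y) := by
  have hcs : (i.castSucc : ℕ) = i := rfl
  have hs : (i.succ : ℕ) = (i : ℕ) + 1 := rfl
  rw [Equiv.swap_apply_def, Equiv.swap_apply_def]
  split_ifs <;> simp only [Fin.lt_def, Fin.ext_iff, not_and] at * <;> omega

lemma inversions_one (n : ℕ) : inversions n 1 = 0 := by
  rw [inversions, Finset.card_eq_zero, Finset.filter_eq_empty_iff]
  rintro p -
  simp only [Equiv.Perm.one_apply, not_and]
  exact fun h => asymm h

lemma inversions_swap_mul_le (n : ℕ) (i : Fin n) (u : Equiv.Perm (Fin (n + 1))) :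
    inversions n (adjTrans n i * u) ≤ inversions n u + 1 := by
  classical
  set a := i.castSucc with ha
  set b := i.succ with hb
  set p0 : Fin (n + 1) × Fin (n + 1) :=
    if u.symm a < u.symm b then (u.symm a, u.symm b) else (u.symm b, u.symm a) with hp0
  have hsub : (Finset.univ.filter fun p : Fin (n+1) × Fin (n+1) =>
      p.1 < p.2 ∧ (adjTrans n i * u) p.2 < (adjTrans n i * u) p.1) ⊆
      insert p0 (Finset.univ.filter fun p : Fin (n+1) × Fin (n+1) =>
        p.1 < p.2 ∧ u p.2 < u p.1) := by
    intro p hp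
    rw [Finset.mem_filter] at hp
    simp only [Finset.mem_filter, Finset.mem_univ, true_and, Equiv.Perm.mul_apply] at hp
    obtain ⟨hlt, hswap⟩ := hp
    rw [Finset.mem_insert, Finset.mem_filter]
    by_cases hcase : (u p.2 = a ∧ u p.1 = b) ∨ (u p.2 = b ∧ u p.1 = a)
    · left
      rcases hcase with ⟨h1', h2'⟩ | ⟨h1', h2'⟩
      · have e1 : u.symm a = p.2 := by rw [← h1', Equiv.symm_apply_apply]
        have e2 : u.symm b = p.1 := by rw [← h2', Equiv.symm_apply_apply]
        have hcond : ¬ u.symm a < u.symm b := by rw [e1, e2]; exact fun h => asymm hlt h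
        rw [hp0, if_neg hcond, e1, e2]
      · have e1 : u.symm b = p.2 := by rw [← h1', Equiv.symm_apply_apply]
        have e2 : u.symm a = p.1 := by rw [← h2', Equiv.symm_apply_apply]
        have hcond : u.symm a < u.symm b := by rw [e1, e2]; exact hlt
        rw [hp0, if_pos hcond, e2, e1]
    · right
      rw [not_or] at hcase
      refine ⟨Finset.mem_univ _, hlt, ?_⟩
      exact (swap_lt_iff n i hcase.1 hcase.2).mp hswap
  calc inversions n (adjTrans n i * u)
      ≤ (insert p0 (Finset.univ.filter fun p : Fin (n+1) × Fin (n+1) =>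
          p.1 < p.2 ∧ u p.2 < u p.1)).card := Finset.card_le_card hsub
    _ ≤ inversions n u + 1 := Finset.card_insert_le _ _

/-- The permutation obtained by multiplying out a word. -/
def prw (n : ℕ) (L : List (Fin n)) : Equiv.Perm (Fin (n + 1)) := (L.map (adjTrans n)).prod

lemma inversions_prw_le (n : ℕ) (L : List (Fin n)) : inversions n (prw n L) ≤ L.length := by
  induction L with
  | nil => simp [prw, inversions_one]
  | cons i L ih =>
      have h : prw n (i :: L) = adjTrans n i * prw n L := by
        simp [prw, List.map_cons, List.prod_cons]
      rw [h, List.length_cons]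
      exact le_trans (inversions_swap_mul_le n i (prw n L)) (Nat.add_le_add_right ih 1)

lemma adj_mul_adj_mul (n : ℕ) (i : Fin n) (u : Equiv.Perm (Fin (n+1))) :
    adjTrans n i * (adjTrans n i * u) = u := by
  rw [← mul_assoc, adjTrans, Equiv.swap_mul_self, one_mul]

/-! ### The fraction field and the twisted coefficients -/

abbrev Rn (n : ℕ) := MvPolynomial (Fin (n + 1)) ℤ
abbrev Kn (n : ℕ) := FractionRing (Rn n)

noncomputable def ι (n : ℕ) : Rn n →+* Kn n := algebraMap _ _

lemma ι_inj (n : ℕ) : Function.Injective (ι n) := IsFractionRing.injective _ _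

noncomputable def sig (n : ℕ) (w : Equiv.Perm (Fin (n + 1))) : Kn n →+* Kn n :=
  IsFractionRing.lift
    (g := (ι n).comp (rename (w : Fin (n+1) → Fin (n+1)) : Rn n →ₐ[ℤ] Rn n).toRingHom)
    ((ι_inj n).comp (rename_injective _ w.injective))

lemma sig_alg (n : ℕ) (w : Equiv.Perm (Fin (n + 1))) (p : Rn n) :
    sig n w (ι n p) = ι n (rename (w : Fin (n+1) → Fin (n+1)) p) :=
  IsFractionRing.lift_algebraMap _ _

lemma sig_sig (n : ℕ) (v u : Equiv.Perm (Fin (n + 1))) (x : Kn n) :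
    sig n v (sig n u x) = sig n (v * u) x := by
  have h : (sig n v).comp (sig n u) = sig n (v * u) := by
    apply IsLocalization.ringHom_ext (nonZeroDivisors (Rn n))
    refine RingHom.ext fun p => ?_
    simp only [RingHom.comp_apply]
    show sig n v (sig n u (ι n p)) = sig n (v * u) (ι n p)
    rw [sig_alg, sig_alg, sig_alg, rename_rename]
    rfl
  exact DFunLike.congr_fun h x

lemma sig_one (n : ℕ) (p : Rn n) : sig n 1 (ι n p) = ι n p := by
  rw [sig_alg]
  norm_num [rename_id]

lemma sig_inj (n : ℕ) (w : Equiv.Perm (Fin (n+1))) : Function.Injective (sig n w) :=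
  RingHom.injective _

noncomputable def alK (n : ℕ) (i : Fin n) : Kn n := ι n (X i.succ - X i.castSucc)

lemma alK_ne (n : ℕ) (i : Fin n) : alK n i ≠ 0 := by
  intro h
  have h2 : X (R := ℤ) i.succ - X i.castSucc = 0 := ι_inj n
    (by rw [show (ι n) (X i.succ - X i.castSucc) = alK n i from rfl, h, map_zero])
  have h3 : X (R := ℤ) i.succ = X (σ := Fin (n+1)) i.castSucc := by
    rwa [sub_eq_zero] at h2
  have h4 : i.succ = i.castSucc := X_injective h3
  have : (i : ℕ) + 1 = (i : ℕ) := congrArg Fin.val h4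
  omega

/-- The coefficient of `σ_u` in the expansion of the composite Demazure operator of a word. -/
noncomputable def co (n : ℕ) : List (Fin n) → Equiv.Perm (Fin (n + 1)) → Kn n
  | [], u => if u = 1 then 1 else 0
  | i :: L, u => (alK n i)⁻¹ * (co n L u - sig n (adjTrans n i) (co n L (adjTrans n i * u)))

lemma co_support (n : ℕ) (L : List (Fin n)) :
    ∀ u, co n L u ≠ 0 → ∃ L', L'.Sublist L ∧ prw n L' = u := by
  induction L with
  | nil =>
      intro u h
      rw [co] at h
      by_cases hu : u = 1
      · exact ⟨[], List.Sublist.refl _, by rw [prw]; simp [hu]⟩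
      · rw [if_neg hu] at h; exact absurd rfl h
  | cons i L ih =>
      intro u h
      rw [co] at h
      by_cases h1 : co n L u ≠ 0
      · obtain ⟨L', hs, hp⟩ := ih u h1
        exact ⟨L', hs.trans (List.sublist_cons_self i L), hp⟩
      · push_neg at h1
        have h2 : co n L (adjTrans n i * u) ≠ 0 := by
          intro h2
          rw [h1, h2, map_zero, sub_zero, mul_zero] at h
          exact h rfl
        obtain ⟨L', hs, hp⟩ := ih _ h2
        refine ⟨i :: L', hs.cons₂ i, ?_⟩
        rw [prw, List.map_cons, List.prod_cons]
        show adjTrans n i * prw n L' = u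
        rw [hp, adj_mul_adj_mul]

lemma co_eq_zero_of_lt (n : ℕ) (L : List (Fin n)) (u : Equiv.Perm (Fin (n+1)))
    (h : L.length < inversions n u) : co n L u = 0 := by
  by_contra hc
  obtain ⟨L', hs, hp⟩ := co_support n L u hc
  have h2 := inversions_prw_le n L'
  rw [hp] at h2
  exact absurd (lt_of_lt_of_le h (h2.trans hs.length_le)) (lt_irrefl _)

lemma co_prod_ne_zero (n : ℕ) (L : List (Fin n))
    (h : L.length = inversions n (prw n L)) : co n L (prw n L) ≠ 0 := by
  induction L with
  | nil =>
      rw [co, prw]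
      simp
  | cons i L ih =>
      have hpr : prw n (i :: L) = adjTrans n i * prw n L := by
        rw [prw, List.map_cons, List.prod_cons]; rfl
      have hlen : L.length = inversions n (prw n L) := by
        have h1 := inversions_prw_le n L
        have h2 := inversions_swap_mul_le n i (prw n L)
        rw [← hpr] at h2
        rw [List.length_cons] at h
        omega
      have hz : co n L (prw n (i :: L)) = 0 := by
        apply co_eq_zero_of_lt
        rw [← h, List.length_cons]
        omega
      rw [co, hpr, adj_mul_adj_mul, ← hpr, hz, zero_sub]
      apply mul_ne_zero (inv_ne_zero (alK_ne n i))
      rw [neg_ne_zero]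
      intro hzero
      exact (ih hlen) (sig_inj n (adjTrans n i) (by rw [hzero, map_zero]))

/-! ### Characters -/

noncomputable def tau (n : ℕ) (w : Equiv.Perm (Fin (n+1))) : Rn n →* Kn n :=
  ((ι n).comp (rename (w : Fin (n+1) → Fin (n+1)) : Rn n →ₐ[ℤ] Rn n).toRingHom).toMonoidHom

lemma tau_apply (n : ℕ) (w : Equiv.Perm (Fin (n+1))) (p : Rn n) :
    tau n w p = ι n (rename (w : Fin (n+1) → Fin (n+1)) p) := rfl

lemma tau_inj (n : ℕ) : Function.Injective (tau n) := by
  intro v u h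
  apply Equiv.ext
  intro j
  have h2 : ι n (rename (v : Fin (n+1) → Fin (n+1)) (X j))
      = ι n (rename (u : Fin (n+1) → Fin (n+1)) (X j)) := DFunLike.congr_fun h (X j)
  rw [rename_X, rename_X] at h2
  exact X_injective (ι_inj n h2)

end DemazureLI

open DemazureLI in
/-- The composite Demazure operators `∂_w` (one for each choice of reduced expressions)
are linearly independent over `P_n = ℤ[X_1, …, X_{n+1}]`: if
`∑_w P_w · ∂_w(Q) = 0` for all `Q`, then all `P_w` vanish. -/
theorem demazure_operators_linearly_independent (n : ℕ)
    (D : Fin n → MvPolynomial (Fin (n + 1)) ℤ →ₗ[ℤ] MvPolynomial (Fin (n + 1)) ℤ)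
    (hD : ∀ (i : Fin n) (P : MvPolynomial (Fin (n + 1)) ℤ),
      (X i.succ - X i.castSucc) * D i P =
        P - rename (Equiv.swap i.castSucc i.succ) P)
    (l : Equiv.Perm (Fin (n + 1)) → List (Fin n))
    (hred : ∀ w, ((l w).map (adjTrans n)).prod = w ∧ (l w).length = inversions n w)
    (P : Equiv.Perm (Fin (n + 1)) → MvPolynomial (Fin (n + 1)) ℤ)
    (hP : ∀ Q : MvPolynomial (Fin (n + 1)) ℤ,
      ∑ w : Equiv.Perm (Fin (n + 1)), P w * (l w).foldr (fun i Q' => D i Q') Q = 0) :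
    ∀ w, P w = 0 := by
  classical
  -- Expansion of composite Demazure operators in terms of the characters `sig u`.
  have expand : ∀ (L : List (Fin n)) (Q : MvPolynomial (Fin (n + 1)) ℤ),
      ι n (L.foldr (fun i Q' => D i Q') Q)
        = ∑ u : Equiv.Perm (Fin (n + 1)), co n L u * sig n u (ι n Q) := by
    intro L
    induction L with
    | nil =>
        intro Q
        rw [List.foldr_nil]
        have : ∀ u : Equiv.Perm (Fin (n+1)),
            co n [] u * sig n u (ι n Q)
              = if u = 1 then sig n u (ι n Q) else 0 := by
          intro u
          rw [co]
          split_ifs <;> simp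
        rw [Finset.sum_congr rfl fun u _ => this u,
          Finset.sum_ite_eq' Finset.univ (1 : Equiv.Perm (Fin (n+1)))
            (fun u => sig n u (ι n Q))]
        simp [sig_one]
    | cons i L ih =>
        intro Q
        rw [List.foldr_cons]
        show ι n (D i (L.foldr (fun i Q' => D i Q') Q)) = _
        have key2 : alK n i * ι n (D i (L.foldr (fun i Q' => D i Q') Q))
            = ι n (L.foldr (fun i Q' => D i Q') Q)
              - sig n (adjTrans n i) (ι n (L.foldr (fun i Q' => D i Q') Q)) := by
          have hh := congrArg (ι n) (hD i (L.foldr (fun i Q' => D i Q') Q))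
          simp only [map_mul, map_sub] at hh
          rw [sig_alg, show alK n i = ι n (X i.succ) - ι n (X i.castSucc) from map_sub _ _ _]
          exact hh
        have hmain : ι n (D i (L.foldr (fun i Q' => D i Q') Q))
            = (alK n i)⁻¹ * (ι n (L.foldr (fun i Q' => D i Q') Q)
              - sig n (adjTrans n i) (ι n (L.foldr (fun i Q' => D i Q') Q))) := by
          rw [← key2, inv_mul_cancel_left₀ (alK_ne n i)]
        rw [hmain, ih]
        have hre : ∑ u : Equiv.Perm (Fin (n+1)),
            (alK n i)⁻¹ * (sig n (adjTrans n i) (co n L u) * sig n (adjTrans n i * u) (ι n Q))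
            = ∑ u : Equiv.Perm (Fin (n+1)),
            (alK n i)⁻¹ * (sig n (adjTrans n i) (co n L (adjTrans n i * u)) * sig n u (ι n Q)) := by
          apply Fintype.sum_equiv (Equiv.mulLeft (adjTrans n i))
          intro u
          simp only [Equiv.coe_mulLeft]
          rw [adj_mul_adj_mul]
        calc (alK n i)⁻¹ * ((∑ u : Equiv.Perm (Fin (n+1)), co n L u * sig n u (ι n Q))
              - sig n (adjTrans n i) (∑ u : Equiv.Perm (Fin (n+1)), co n L u * sig n u (ι n Q)))
            = ∑ u : Equiv.Perm (Fin (n+1)),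
                ((alK n i)⁻¹ * (co n L u * sig n u (ι n Q))
                  - (alK n i)⁻¹ * (sig n (adjTrans n i) (co n L u)
                      * sig n (adjTrans n i * u) (ι n Q))) := by
              rw [map_sum]
              simp only [map_mul, sig_sig]
              rw [← Finset.sum_sub_distrib, Finset.mul_sum]
              simp only [mul_sub]
          _ = (∑ u : Equiv.Perm (Fin (n+1)), (alK n i)⁻¹ * (co n L u * sig n u (ι n Q)))
              - ∑ u : Equiv.Perm (Fin (n+1)), (alK n i)⁻¹
                  * (sig n (adjTrans n i) (co n L u) * sig n (adjTrans n i * u) (ι n Q)) :=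
              Finset.sum_sub_distrib _ _
          _ = (∑ u : Equiv.Perm (Fin (n+1)), (alK n i)⁻¹ * (co n L u * sig n u (ι n Q)))
              - ∑ u : Equiv.Perm (Fin (n+1)), (alK n i)⁻¹
                  * (sig n (adjTrans n i) (co n L (adjTrans n i * u)) * sig n u (ι n Q)) := by
              rw [hre]
          _ = ∑ u : Equiv.Perm (Fin (n+1)), co n (i :: L) u * sig n u (ι n Q) := by
              rw [← Finset.sum_sub_distrib]
              apply Finset.sum_congr rfl
              intro u _
              rw [co]
              ring
  -- The total coefficient of each character vanishes.
  have hA : ∀ u, (∑ w : Equiv.Perm (Fin (n + 1)), ι n (P w) * co n (l w) u) = 0 := by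
    have hsum : ∀ Q : MvPolynomial (Fin (n + 1)) ℤ,
        ∑ u : Equiv.Perm (Fin (n + 1)),
          (∑ w : Equiv.Perm (Fin (n + 1)), ι n (P w) * co n (l w) u) * sig n u (ι n Q) = 0 := by
      intro Q
      have h0 := congrArg (ι n) (hP Q)
      rw [map_sum, map_zero] at h0
      simp only [map_mul, expand] at h0
      calc ∑ u : Equiv.Perm (Fin (n + 1)),
            (∑ w : Equiv.Perm (Fin (n + 1)), ι n (P w) * co n (l w) u) * sig n u (ι n Q)
          = ∑ u : Equiv.Perm (Fin (n + 1)), ∑ w : Equiv.Perm (Fin (n + 1)),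
              ι n (P w) * co n (l w) u * sig n u (ι n Q) := by
            apply Finset.sum_congr rfl
            intro u _
            rw [Finset.sum_mul]
        _ = ∑ w : Equiv.Perm (Fin (n + 1)), ∑ u : Equiv.Perm (Fin (n + 1)),
              ι n (P w) * co n (l w) u * sig n u (ι n Q) := Finset.sum_comm
        _ = ∑ w : Equiv.Perm (Fin (n + 1)), ι n (P w)
              * ∑ u : Equiv.Perm (Fin (n + 1)), co n (l w) u * sig n u (ι n Q) := by
            apply Finset.sum_congr rfl
            intro w _
            rw [Finset.mul_sum]
            apply Finset.sum_congr rfl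
            intro u _
            ring
        _ = 0 := h0
    have li := (linearIndependent_monoidHom (Rn n) (Kn n)).comp (tau n) (tau_inj n)
    intro u
    refine Fintype.linearIndependent_iff.mp li
      (fun u => ∑ w : Equiv.Perm (Fin (n + 1)), ι n (P w) * co n (l w) u) ?_ u
    funext p
    simp only [Finset.sum_apply, Pi.smul_apply, Function.comp_apply, smul_eq_mul,
      Pi.zero_apply, tau_apply]
    have h3 := hsum p
    simp only [sig_alg] at h3
    exact h3
  -- Conclusion by downward induction using triangularity.
  by_contra hcon
  push_neg at hcon
  obtain ⟨w1, hw1⟩ := hcon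
  have hne : (Finset.univ.filter fun v : Equiv.Perm (Fin (n+1)) => P v ≠ 0).Nonempty :=
    ⟨w1, Finset.mem_filter.mpr ⟨Finset.mem_univ _, hw1⟩⟩
  obtain ⟨w0, hw0S, hmax⟩ :=
    (Finset.univ.filter fun v : Equiv.Perm (Fin (n+1)) => P v ≠ 0).exists_max_image
      (inversions n) hne
  have hw0 : P w0 ≠ 0 := (Finset.mem_filter.mp hw0S).2
  have hterm : ∀ v : Equiv.Perm (Fin (n+1)), v ≠ w0 → ι n (P v) * co n (l v) w0 = 0 := by
    intro v hv
    by_cases hPv : P v = 0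
    · rw [hPv, map_zero, zero_mul]
    · have hle : inversions n v ≤ inversions n w0 :=
        hmax v (Finset.mem_filter.mpr ⟨Finset.mem_univ _, hPv⟩)
      have hco : co n (l v) w0 = 0 := by
        by_contra hc
        obtain ⟨L', hsub, hpr⟩ := co_support n (l v) w0 hc
        have h1 : inversions n w0 ≤ L'.length := by
          have := inversions_prw_le n L'
          rwa [hpr] at this
        have h2 : L'.length ≤ (l v).length := hsub.length_le
        have h3 : (l v).length = inversions n v := (hred v).2
        have hlen : L'.length = (l v).length := by omega
        have hLL : L' = l v := hsub.eq_of_length hlen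
        rw [hLL] at hpr
        exact hv ((hred v).1.symm.trans hpr)
      rw [hco, mul_zero]
  have hz := hA w0
  rw [Finset.sum_eq_single w0 (fun v _ hv => hterm v hv)
    (fun h => absurd (Finset.mem_univ w0) h)] at hz
  have hcoww : co n (l w0) w0 ≠ 0 := by
    have hp : prw n (l w0) = w0 := (hred w0).1
    have hcz := co_prod_ne_zero n (l w0) (by rw [hp]; exact (hred w0).2)
    rwa [hp] at hcz
  have hPz : ι n (P w0) = 0 := by
    rcases mul_eq_zero.mp hz with h | h
    · exact h
    · exact absurd h hcoww
  exact hw0 (ι_inj n (hPz.trans (map_zero (ι n)).symm))
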